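/- Under the centered model and for any λ ≥ 0, a point (0, cμ) with c ∈ ℝ, c ≠ 0, is a stationary point of the quartic population loss L^h_λ (i.e. ∇L^h_λ(0, cμ) = 0) if and only if (‖μ‖₂⁴ + 6‖μ‖₂² + M_Z)‖μ‖₂² c² = ‖μ‖₂² + 1. Moreover (0, 0) is always a stationary point of L^h_λ. -/

import Mathlib

open MeasureTheory ProbabilityTheory
open scoped RealInnerProductSpace

/-- `ℝ^d` with the Euclidean norm. -/
abbrev Vec (d : ℕ) := EuclideanSpace ℝ (Fin d)

/-- `ℝ × ℝ^d` with the Euclidean (ℓ²) norm, the domain of the loss `(α, β) ↦ L(α, β)`. -/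
abbrev Pr (d : ℕ) := WithLp 2 (ℝ × Vec d)

/-- Build the point `(α, β) ∈ ℝ × ℝ^d`. -/
noncomputable def mkp {d : ℕ} (α : ℝ) (β : Vec d) : Pr d :=
  (WithLp.equiv 2 (ℝ × Vec d)).symm (α, β)

/-- The quartic loss `h(x) = (x² - 1)² / 4`. -/
noncomputable def hq (x : ℝ) : ℝ := (x ^ 2 - 1) ^ 2 / 4

/-- The population loss `γ = (α, β) ↦ E g(α + β⊤X) + (λ/2) α²` built from a scalar loss `g`. -/
noncomputable def popLoss {d : ℕ} {Ω : Type*} [MeasurableSpace Ω] (P : Measure Ω)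
    (X : Ω → Vec d) (g : ℝ → ℝ) (lam : ℝ) (γ : Pr d) : ℝ :=
  (∫ ω, g ((WithLp.equiv 2 (ℝ × Vec d) γ).1 + ⟪(WithLp.equiv 2 (ℝ × Vec d) γ).2, X ω⟫) ∂P)
    + lam / 2 * ((WithLp.equiv 2 (ℝ × Vec d) γ).1) ^ 2


lemma key_integral {d : ℕ} {Ω : Type*} [MeasurableSpace Ω] (P : Measure Ω) [IsProbabilityMeasure P]
    (Y : Ω → ℝ) (Z : Ω → Vec d) (X : Ω → Vec d) (μ : Vec d) (MZ : ℝ)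
    (hY : Measurable Y) (hZ : Measurable Z)
    (hYpm : ∀ ω, Y ω = 1 ∨ Y ω = -1)
    (hY1 : P {ω | Y ω = 1} = 1 / 2) (hY2 : P {ω | Y ω = -1} = 1 / 2)
    (hindep : IndepFun Y Z P)
    (hZsg : ∀ u : Vec d, ‖u‖ = 1 → ∀ p : ℝ, 1 ≤ p → Integrable (fun ω => |⟪u, Z ω⟫| ^ p) P)
    (hZcov : ∀ u v : Vec d, (∫ ω, ⟪u, Z ω⟫ * ⟪v, Z ω⟫ ∂P) = ⟪u, v⟫)
    (hZsym : ∀ O : Vec d ≃ₗᵢ[ℝ] Vec d,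
      Measure.map (fun ω => O (Z ω)) P = Measure.map Z P)
    (hMZ : ∀ u : Vec d, ‖u‖ = 1 → (∫ ω, ⟪u, Z ω⟫ ^ 4 ∂P) = MZ)
    (hX : ∀ ω, X ω = Y ω • μ + Z ω) (a : ℝ) (b : Vec d) :
    ∫ ω, hq (a + ⟪b, X ω⟫) ∂P =
      (a ^ 4 + 6 * a ^ 2 * (⟪b, μ⟫ ^ 2 + ⟪b, b⟫) + ⟪b, μ⟫ ^ 4 + 6 * ⟪b, μ⟫ ^ 2 * ⟪b, b⟫
        + MZ * ⟪b, b⟫ ^ 2 - 2 * (a ^ 2 + ⟪b, μ⟫ ^ 2 + ⟪b, b⟫) + 1) / 4 := by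
  -- integrability of powers of W := ⟪b, Z ·⟫
  have mW : Measurable fun ω => ⟪b, Z ω⟫ := measurable_const.inner hZ
  have iW : ∀ n : ℕ, Integrable (fun ω => ⟪b, Z ω⟫ ^ n) P := by
    intro n
    rcases Nat.eq_zero_or_pos n with h0 | hn
    · subst h0; simpa using integrable_const (1 : ℝ)
    rcases eq_or_ne b 0 with hb | hb
    · subst hb
      simp only [inner_zero_left, zero_pow hn.ne']
      exact integrable_const 0
    · have hbn : ‖b‖ ≠ 0 := norm_ne_zero_iff.mpr hb
      set u : Vec d := ‖b‖⁻¹ • b with hu_def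
      have hu : ‖u‖ = 1 := by
        rw [hu_def, norm_smul, norm_inv, norm_norm]
        field_simp
      have hbu : ∀ z : Vec d, ⟪b, z⟫ = ‖b‖ * ⟪u, z⟫ := by
        intro z
        rw [hu_def, real_inner_smul_left]
        field_simp
      have h := hZsg u hu n (by exact_mod_cast hn)
      simp only [Real.rpow_natCast] at h
      refine ((h.const_mul (‖b‖ ^ n)).mono'
        ((measurable_const.inner hZ).pow_const n).aestronglyMeasurable ?_)
      filter_upwards with ω
      rw [hbu (Z ω), Real.norm_eq_abs, abs_pow, abs_mul, abs_norm, mul_pow]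
  have iY : Integrable Y P := by
    refine (integrable_const (1 : ℝ)).mono' hY.aestronglyMeasurable ?_
    filter_upwards with ω
    rcases hYpm ω with h | h <;> simp [h]
  have iYW : ∀ n : ℕ, Integrable (fun ω => Y ω * ⟪b, Z ω⟫ ^ n) P := by
    intro n
    refine ((iW n).abs.mono' (hY.mul (mW.pow_const n)).aestronglyMeasurable ?_)
    filter_upwards with ω
    rw [Real.norm_eq_abs, abs_mul]
    rcases hYpm ω with h | h <;> simp [h]
  -- E Y = 0
  have EY : ∫ ω, Y ω ∂P = 0 := by
    have hA : MeasurableSet {ω | Y ω = 1} := hY (measurableSet_singleton 1)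
    have hB : MeasurableSet {ω | Y ω = -1} := hY (measurableSet_singleton (-1))
    have hpt : Y = fun ω => Set.indicator {ω | Y ω = 1} (fun _ => (1 : ℝ)) ω
        - Set.indicator {ω | Y ω = -1} (fun _ => (1 : ℝ)) ω := by
      funext ω
      rcases hYpm ω with h | h <;>
        simp [Set.indicator_apply, h, Set.mem_setOf_eq] <;> norm_num
    rw [hpt, integral_sub ((integrable_const (1:ℝ)).indicator hA)
      ((integrable_const (1:ℝ)).indicator hB),
      integral_indicator_const _ hA, integral_indicator_const _ hB, measureReal_def,
      measureReal_def, hY1, hY2]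
    simp
  -- E[Y W^n] = 0
  have EYW : ∀ n : ℕ, ∫ ω, Y ω * ⟪b, Z ω⟫ ^ n ∂P = 0 := by
    intro n
    have hmeas : Measurable fun z : Vec d => ⟪b, z⟫ ^ n :=
      (measurable_const.inner measurable_id).pow_const n
    have hi : IndepFun Y (fun ω => ⟪b, Z ω⟫ ^ n) P := hindep.comp measurable_id hmeas
    have h3 : ∫ ω, Y ω * ⟪b, Z ω⟫ ^ n ∂P
        = (∫ ω, Y ω ∂P) * ∫ ω, ⟪b, Z ω⟫ ^ n ∂P :=
      hi.integral_fun_mul_eq_mul_integral iY.aestronglyMeasurable (iW n).aestronglyMeasurable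
    rw [h3, EY, zero_mul]
  -- symmetry: odd moments vanish
  have Wneg : ∀ n : ℕ, ∫ ω, ⟪b, Z ω⟫ ^ n ∂P = ∫ ω, (-⟪b, Z ω⟫) ^ n ∂P := by
    intro n
    have hmap := hZsym (LinearIsometryEquiv.neg ℝ)
    have h1 : (fun ω => (LinearIsometryEquiv.neg ℝ (E := Vec d)) (Z ω)) = fun ω => -Z ω := by
      funext ω; simp
    rw [h1] at hmap
    have hc : Continuous fun z : Vec d => ⟪b, z⟫ ^ n :=
      (continuous_const.inner continuous_id).pow n
    calc ∫ ω, ⟪b, Z ω⟫ ^ n ∂P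
        = ∫ z, ⟪b, z⟫ ^ n ∂(Measure.map Z P) :=
          (integral_map hZ.aemeasurable hc.aestronglyMeasurable).symm
      _ = ∫ z, ⟪b, z⟫ ^ n ∂(Measure.map (fun ω => -Z ω) P) := by rw [hmap]
      _ = ∫ ω, ⟪b, -Z ω⟫ ^ n ∂P := integral_map hZ.neg.aemeasurable hc.aestronglyMeasurable
      _ = ∫ ω, (-⟪b, Z ω⟫) ^ n ∂P := by simp only [inner_neg_right]
  have W1 : ∫ ω, ⟪b, Z ω⟫ ∂P = 0 := by
    have h := Wneg 1
    simp only [pow_one] at h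
    rw [integral_neg] at h
    linarith
  have W3 : ∫ ω, ⟪b, Z ω⟫ ^ 3 ∂P = 0 := by
    have h := Wneg 3
    have h2 : (fun ω => (-⟪b, Z ω⟫) ^ 3) = fun ω => -(⟪b, Z ω⟫ ^ 3) := by
      funext ω; ring
    rw [h2, integral_neg] at h
    linarith
  have W2 : ∫ ω, ⟪b, Z ω⟫ ^ 2 ∂P = ⟪b, b⟫ := by
    have h2 : (fun ω => ⟪b, Z ω⟫ ^ 2) = fun ω => ⟪b, Z ω⟫ * ⟪b, Z ω⟫ := by
      funext ω; ring
    rw [h2, hZcov b b]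
  have W4 : ∫ ω, ⟪b, Z ω⟫ ^ 4 ∂P = MZ * ⟪b, b⟫ ^ 2 := by
    rcases eq_or_ne b 0 with hb | hb
    · subst hb; simp
    · have hbn : ‖b‖ ≠ 0 := norm_ne_zero_iff.mpr hb
      set u : Vec d := ‖b‖⁻¹ • b with hu_def
      have hu : ‖u‖ = 1 := by
        rw [hu_def, norm_smul, norm_inv, norm_norm]
        field_simp
      have hbu : ∀ z : Vec d, ⟪b, z⟫ = ‖b‖ * ⟪u, z⟫ := by
        intro z
        rw [hu_def, real_inner_smul_left]
        field_simp
      have h4 := hMZ u hu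
      have h2 : (fun ω => ⟪b, Z ω⟫ ^ 4) = fun ω => ‖b‖ ^ 4 * ⟪u, Z ω⟫ ^ 4 := by
        funext ω; rw [hbu (Z ω)]; ring
      rw [h2, integral_const_mul, h4, real_inner_self_eq_norm_sq]
      ring
  -- master formulas
  have master : ∀ c0 c1 c2 c3 c4 : ℝ,
      ∫ ω, (c0 + c1 * ⟪b, Z ω⟫ + c2 * ⟪b, Z ω⟫ ^ 2 + c3 * ⟪b, Z ω⟫ ^ 3 + c4 * ⟪b, Z ω⟫ ^ 4) ∂P
        = c0 + c2 * ⟪b, b⟫ + c4 * (MZ * ⟪b, b⟫ ^ 2) := by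
    intro c0 c1 c2 c3 c4
    have i0 : Integrable (fun _ : Ω => c0) P := integrable_const _
    have i1 : Integrable (fun ω => c1 * ⟪b, Z ω⟫) P := by
      simpa using (iW 1).const_mul c1
    have i2 : Integrable (fun ω => c2 * ⟪b, Z ω⟫ ^ 2) P := (iW 2).const_mul c2
    have i3 : Integrable (fun ω => c3 * ⟪b, Z ω⟫ ^ 3) P := (iW 3).const_mul c3
    have i4 : Integrable (fun ω => c4 * ⟪b, Z ω⟫ ^ 4) P := (iW 4).const_mul c4
    have i01 : Integrable (fun ω => c0 + c1 * ⟪b, Z ω⟫) P := i0.add i1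
    have i012 : Integrable (fun ω => c0 + c1 * ⟪b, Z ω⟫ + c2 * ⟪b, Z ω⟫ ^ 2) P := i01.add i2
    have i0123 : Integrable (fun ω => c0 + c1 * ⟪b, Z ω⟫ + c2 * ⟪b, Z ω⟫ ^ 2
        + c3 * ⟪b, Z ω⟫ ^ 3) P := i012.add i3
    rw [integral_add i0123 i4, integral_add i012 i3, integral_add i01 i2,
      integral_add i0 i1, integral_const_mul, integral_const_mul, integral_const_mul,
      integral_const_mul, integral_const, W1, W2, W3, W4]
    simp [measure_univ]
  have iPolyY : ∀ k0 k1 k2 k3 : ℝ,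
      Integrable (fun ω => Y ω * (k0 + k1 * ⟪b, Z ω⟫ + k2 * ⟪b, Z ω⟫ ^ 2
        + k3 * ⟪b, Z ω⟫ ^ 3)) P := by
    intro k0 k1 k2 k3
    have h : Integrable (fun ω => k0 * (Y ω * ⟪b, Z ω⟫ ^ 0) + k1 * (Y ω * ⟪b, Z ω⟫ ^ 1)
        + k2 * (Y ω * ⟪b, Z ω⟫ ^ 2) + k3 * (Y ω * ⟪b, Z ω⟫ ^ 3)) P :=
      ((((iYW 0).const_mul k0).add ((iYW 1).const_mul k1)).add
        ((iYW 2).const_mul k2)).add ((iYW 3).const_mul k3)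
    exact h.congr (Filter.Eventually.of_forall fun ω => by ring)
  have masterY : ∀ k0 k1 k2 k3 : ℝ,
      ∫ ω, Y ω * (k0 + k1 * ⟪b, Z ω⟫ + k2 * ⟪b, Z ω⟫ ^ 2 + k3 * ⟪b, Z ω⟫ ^ 3) ∂P = 0 := by
    intro k0 k1 k2 k3
    have hre : (fun ω => Y ω * (k0 + k1 * ⟪b, Z ω⟫ + k2 * ⟪b, Z ω⟫ ^ 2 + k3 * ⟪b, Z ω⟫ ^ 3))
        = fun ω => k0 * (Y ω * ⟪b, Z ω⟫ ^ 0) + k1 * (Y ω * ⟪b, Z ω⟫ ^ 1)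
          + k2 * (Y ω * ⟪b, Z ω⟫ ^ 2) + k3 * (Y ω * ⟪b, Z ω⟫ ^ 3) := by
      funext ω; ring
    have j0 : Integrable (fun ω => k0 * (Y ω * ⟪b, Z ω⟫ ^ 0)) P := (iYW 0).const_mul k0
    have j1 : Integrable (fun ω => k1 * (Y ω * ⟪b, Z ω⟫ ^ 1)) P := (iYW 1).const_mul k1
    have j2 : Integrable (fun ω => k2 * (Y ω * ⟪b, Z ω⟫ ^ 2)) P := (iYW 2).const_mul k2
    have j3 : Integrable (fun ω => k3 * (Y ω * ⟪b, Z ω⟫ ^ 3)) P := (iYW 3).const_mul k3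
    have j01 : Integrable (fun ω => k0 * (Y ω * ⟪b, Z ω⟫ ^ 0) + k1 * (Y ω * ⟪b, Z ω⟫ ^ 1)) P :=
      j0.add j1
    have j012 : Integrable (fun ω => k0 * (Y ω * ⟪b, Z ω⟫ ^ 0) + k1 * (Y ω * ⟪b, Z ω⟫ ^ 1)
        + k2 * (Y ω * ⟪b, Z ω⟫ ^ 2)) P := j01.add j2
    rw [hre, integral_add j012 j3, integral_add j01 j2,
      integral_add j0 j1, integral_const_mul, integral_const_mul, integral_const_mul,
      integral_const_mul, EYW 0, EYW 1, EYW 2, EYW 3]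
    ring
  -- pointwise decomposition
  have hpt : (fun ω => hq (a + ⟪b, X ω⟫)) = fun ω =>
      ((a ^ 4 + 6 * a ^ 2 * ⟪b, μ⟫ ^ 2 - 2 * a ^ 2 + ⟪b, μ⟫ ^ 4 - 2 * ⟪b, μ⟫ ^ 2 + 1) / 4
        + (a ^ 3 + 3 * a * ⟪b, μ⟫ ^ 2 - a) * ⟪b, Z ω⟫
        + ((3 * a ^ 2 + 3 * ⟪b, μ⟫ ^ 2 - 1) / 2) * ⟪b, Z ω⟫ ^ 2
        + a * ⟪b, Z ω⟫ ^ 3 + (1 / 4) * ⟪b, Z ω⟫ ^ 4)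
      + Y ω * ((a ^ 3 * ⟪b, μ⟫ + a * ⟪b, μ⟫ ^ 3 - a * ⟪b, μ⟫)
        + (3 * a ^ 2 * ⟪b, μ⟫ + ⟪b, μ⟫ ^ 3 - ⟪b, μ⟫) * ⟪b, Z ω⟫
        + (3 * a * ⟪b, μ⟫) * ⟪b, Z ω⟫ ^ 2 + ⟪b, μ⟫ * ⟪b, Z ω⟫ ^ 3) := by
    funext ω
    rw [hX ω, inner_add_right, real_inner_smul_right]
    rcases hYpm ω with h | h <;> rw [h] <;> simp only [hq] <;> ring
  have iG : Integrable (fun ω =>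
      (a ^ 4 + 6 * a ^ 2 * ⟪b, μ⟫ ^ 2 - 2 * a ^ 2 + ⟪b, μ⟫ ^ 4 - 2 * ⟪b, μ⟫ ^ 2 + 1) / 4
        + (a ^ 3 + 3 * a * ⟪b, μ⟫ ^ 2 - a) * ⟪b, Z ω⟫
        + ((3 * a ^ 2 + 3 * ⟪b, μ⟫ ^ 2 - 1) / 2) * ⟪b, Z ω⟫ ^ 2
        + a * ⟪b, Z ω⟫ ^ 3 + (1 / 4) * ⟪b, Z ω⟫ ^ 4) P := by
    have i0 : Integrable (fun _ : Ω =>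
        (a ^ 4 + 6 * a ^ 2 * ⟪b, μ⟫ ^ 2 - 2 * a ^ 2 + ⟪b, μ⟫ ^ 4 - 2 * ⟪b, μ⟫ ^ 2 + 1) / 4) P :=
      integrable_const _
    have i1 : Integrable (fun ω => (a ^ 3 + 3 * a * ⟪b, μ⟫ ^ 2 - a) * ⟪b, Z ω⟫) P := by
      simpa using (iW 1).const_mul (a ^ 3 + 3 * a * ⟪b, μ⟫ ^ 2 - a)
    exact (((i0.add i1).add ((iW 2).const_mul _)).add ((iW 3).const_mul a)).add
      ((iW 4).const_mul _)
  rw [hpt, integral_add iG (iPolyY _ _ _ _),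
    master ((a ^ 4 + 6 * a ^ 2 * ⟪b, μ⟫ ^ 2 - 2 * a ^ 2 + ⟪b, μ⟫ ^ 4 - 2 * ⟪b, μ⟫ ^ 2 + 1) / 4)
      (a ^ 3 + 3 * a * ⟪b, μ⟫ ^ 2 - a) ((3 * a ^ 2 + 3 * ⟪b, μ⟫ ^ 2 - 1) / 2) a (1 / 4),
    masterY _ _ _ _]
  ring

/-- under the centered model and for any `λ ≥ 0`, a point `(0, cμ)` with `c ≠ 0`
is a stationary point of `L^h_λ` iff `(‖μ‖⁴ + 6‖μ‖² + M_Z)‖μ‖² c² = ‖μ‖² + 1`; moreover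
`(0, 0)` is always a stationary point. -/
theorem quartic_population_loss_stationary_on_signal_line
    {d : ℕ} {Ω : Type*} [MeasurableSpace Ω] (P : Measure Ω) [IsProbabilityMeasure P]
    (Y : Ω → ℝ) (Z : Ω → Vec d) (X : Ω → Vec d) (μ : Vec d) (M MZ lam : ℝ)
    (hμ : μ ≠ 0) (hlam : 0 ≤ lam)
    (hY : Measurable Y) (hZ : Measurable Z)
    (hYpm : ∀ ω, Y ω = 1 ∨ Y ω = -1)
    (hY1 : P {ω | Y ω = 1} = 1 / 2) (hY2 : P {ω | Y ω = -1} = 1 / 2)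
    (hindep : IndepFun Y Z P)
    (hZsg : ∀ u : Vec d, ‖u‖ = 1 → ∀ p : ℝ, 1 ≤ p →
      Integrable (fun ω => |⟪u, Z ω⟫| ^ p) P ∧
        (∫ ω, |⟪u, Z ω⟫| ^ p ∂P) ^ (1 / p) ≤ Real.sqrt p * M)
    (hZmean : (∫ ω, Z ω ∂P) = 0)
    (hZcov : ∀ u v : Vec d, (∫ ω, ⟪u, Z ω⟫ * ⟪v, Z ω⟫ ∂P) = ⟪u, v⟫)
    (hZsym : ∀ O : Vec d ≃ₗᵢ[ℝ] Vec d,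
      Measure.map (fun ω => O (Z ω)) P = Measure.map Z P)
    (hMZ : ∀ u : Vec d, ‖u‖ = 1 → (∫ ω, ⟪u, Z ω⟫ ^ 4 ∂P) = MZ)
    (hX : ∀ ω, X ω = Y ω • μ + Z ω)
    :
    (∀ c : ℝ, c ≠ 0 →
      (gradient (popLoss P X hq lam) (mkp 0 (c • μ)) = 0 ↔
        (‖μ‖ ^ 4 + 6 * ‖μ‖ ^ 2 + MZ) * ‖μ‖ ^ 2 * c ^ 2 = ‖μ‖ ^ 2 + 1)) ∧
    gradient (popLoss P X hq lam) (mkp 0 0) = 0 := by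
  have key := key_integral P Y Z X μ MZ hY hZ hYpm hY1 hY2 hindep
    (fun u hu p hp => (hZsg u hu p hp).1) hZcov hZsym hMZ hX
  have hF : popLoss P X hq lam = fun γ : Pr d =>
      1 / 4 * (((WithLp.equiv 2 (ℝ × Vec d) γ).1 * (WithLp.equiv 2 (ℝ × Vec d) γ).1)
            * ((WithLp.equiv 2 (ℝ × Vec d) γ).1 * (WithLp.equiv 2 (ℝ × Vec d) γ).1)
          + 6 * (((WithLp.equiv 2 (ℝ × Vec d) γ).1 * (WithLp.equiv 2 (ℝ × Vec d) γ).1)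
            * (⟪(WithLp.equiv 2 (ℝ × Vec d) γ).2, μ⟫ * ⟪(WithLp.equiv 2 (ℝ × Vec d) γ).2, μ⟫
              + ⟪(WithLp.equiv 2 (ℝ × Vec d) γ).2, (WithLp.equiv 2 (ℝ × Vec d) γ).2⟫))
          + (⟪(WithLp.equiv 2 (ℝ × Vec d) γ).2, μ⟫ * ⟪(WithLp.equiv 2 (ℝ × Vec d) γ).2, μ⟫)
            * (⟪(WithLp.equiv 2 (ℝ × Vec d) γ).2, μ⟫ * ⟪(WithLp.equiv 2 (ℝ × Vec d) γ).2, μ⟫)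
          + 6 * ((⟪(WithLp.equiv 2 (ℝ × Vec d) γ).2, μ⟫ * ⟪(WithLp.equiv 2 (ℝ × Vec d) γ).2, μ⟫)
            * ⟪(WithLp.equiv 2 (ℝ × Vec d) γ).2, (WithLp.equiv 2 (ℝ × Vec d) γ).2⟫)
          + MZ * (⟪(WithLp.equiv 2 (ℝ × Vec d) γ).2, (WithLp.equiv 2 (ℝ × Vec d) γ).2⟫
            * ⟪(WithLp.equiv 2 (ℝ × Vec d) γ).2, (WithLp.equiv 2 (ℝ × Vec d) γ).2⟫)
          - 2 * ((WithLp.equiv 2 (ℝ × Vec d) γ).1 * (WithLp.equiv 2 (ℝ × Vec d) γ).1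
            + ⟪(WithLp.equiv 2 (ℝ × Vec d) γ).2, μ⟫ * ⟪(WithLp.equiv 2 (ℝ × Vec d) γ).2, μ⟫
            + ⟪(WithLp.equiv 2 (ℝ × Vec d) γ).2, (WithLp.equiv 2 (ℝ × Vec d) γ).2⟫)
          + 1)
        + lam / 2 * ((WithLp.equiv 2 (ℝ × Vec d) γ).1 * (WithLp.equiv 2 (ℝ × Vec d) γ).1) := by
    funext γ
    show (∫ ω, hq ((WithLp.equiv 2 (ℝ × Vec d) γ).1
        + ⟪(WithLp.equiv 2 (ℝ × Vec d) γ).2, X ω⟫) ∂P)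
      + lam / 2 * ((WithLp.equiv 2 (ℝ × Vec d) γ).1) ^ 2 = _
    rw [key ((WithLp.equiv 2 (ℝ × Vec d) γ).1) ((WithLp.equiv 2 (ℝ × Vec d) γ).2)]
    ring
  have GRAD : ∀ c : ℝ, gradient (popLoss P X hq lam) (mkp 0 (c • μ)) =
      mkp 0 ((c * ((‖μ‖ ^ 4 + 6 * ‖μ‖ ^ 2 + MZ) * ‖μ‖ ^ 2 * c ^ 2 - (‖μ‖ ^ 2 + 1))) • μ) := by
    intro c
    rw [hF]
    refine HasGradientAt.gradient ?_
    rw [hasGradientAt_iff_hasFDerivAt]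
    have ha : HasFDerivAt (fun γ : Pr d => (WithLp.equiv 2 (ℝ × Vec d) γ).1)
        ((ContinuousLinearMap.fst ℝ ℝ (Vec d)).comp
          (WithLp.prodContinuousLinearEquiv 2 ℝ ℝ (Vec d)).toContinuousLinearMap)
        (mkp 0 (c • μ)) :=
      ((ContinuousLinearMap.fst ℝ ℝ (Vec d)).comp
        (WithLp.prodContinuousLinearEquiv 2 ℝ ℝ (Vec d)).toContinuousLinearMap).hasFDerivAt
    have hb : HasFDerivAt (fun γ : Pr d => (WithLp.equiv 2 (ℝ × Vec d) γ).2)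
        ((ContinuousLinearMap.snd ℝ ℝ (Vec d)).comp
          (WithLp.prodContinuousLinearEquiv 2 ℝ ℝ (Vec d)).toContinuousLinearMap)
        (mkp 0 (c • μ)) :=
      ((ContinuousLinearMap.snd ℝ ℝ (Vec d)).comp
        (WithLp.prodContinuousLinearEquiv 2 ℝ ℝ (Vec d)).toContinuousLinearMap).hasFDerivAt
    have hs := hb.inner ℝ (hasFDerivAt_const μ (mkp 0 (c • μ)))
    have hqd := hb.inner ℝ hb
    have h2a := ha.mul ha
    have h2s := hs.mul hs
    refine HasFDerivAt.congr_fderiv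
      ((((((((h2a.mul h2a).add ((h2a.mul (h2s.add hqd)).const_mul 6)).add
        (h2s.mul h2s)).add ((h2s.mul hqd).const_mul 6)).add
        ((hqd.mul hqd).const_mul MZ)).sub (((h2a.add h2s).add hqd).const_mul 2)).add_const
        1).const_mul (1 / 4) |>.add (h2a.const_mul (lam / 2))) ?_
    ext v
    simp only [ContinuousLinearMap.add_apply, ContinuousLinearMap.coe_smul',
      ContinuousLinearMap.smul_apply, ContinuousLinearMap.sub_apply,
      ContinuousLinearMap.coe_comp', Function.comp_apply, ContinuousLinearMap.coe_fst',
      ContinuousLinearMap.coe_snd', ContinuousLinearMap.prod_apply,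
      ContinuousLinearMap.zero_apply, fderivInnerCLM_apply, ContinuousLinearEquiv.coe_coe,
      WithLp.prodContinuousLinearEquiv_apply, WithLp.equiv_apply, WithLp.ofLp_fst, WithLp.ofLp_snd,
      InnerProductSpace.toDual_apply_apply, WithLp.prod_inner_apply, mkp,
      WithLp.equiv_symm_apply, WithLp.toLp_fst, WithLp.toLp_snd, Equiv.apply_symm_apply,
      smul_eq_mul, Pi.smul_apply, inner_zero_left, inner_zero_right,
      real_inner_smul_left, real_inner_smul_right, real_inner_self_eq_norm_sq,
      RCLike.inner_apply, starRingEnd_apply, star_trivial, real_inner_comm μ,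
      norm_smul, Real.norm_eq_abs, mul_pow, sq_abs, Pi.mul_apply]
    ring
  refine ⟨fun c hc => ?_, ?_⟩
  · rw [GRAD c]
    constructor
    · intro h
      have h2 : (c * ((‖μ‖ ^ 4 + 6 * ‖μ‖ ^ 2 + MZ) * ‖μ‖ ^ 2 * c ^ 2
          - (‖μ‖ ^ 2 + 1))) • μ = (0 : Vec d) := by
        have h3 := congrArg (fun γ : Pr d => (WithLp.equiv 2 (ℝ × Vec d) γ).2) h
        simpa [mkp] using h3
      rcases smul_eq_zero.mp h2 with h3 | h3
      · rcases mul_eq_zero.mp h3 with h4 | h4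
        · exact absurd h4 hc
        · linarith [sub_eq_zero.mp h4]
      · exact absurd h3 hμ
    · intro h
      have h0 : (c * ((‖μ‖ ^ 4 + 6 * ‖μ‖ ^ 2 + MZ) * ‖μ‖ ^ 2 * c ^ 2 - (‖μ‖ ^ 2 + 1))) = 0 := by
        rw [h, sub_self, mul_zero]
      rw [h0, zero_smul]
      rfl
  · have h := GRAD 0
    simp only [zero_mul, zero_smul] at h
    exact h.trans rfl
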